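/- Fix θ ∈ ℂ. Let q1, p1, q2, p2, u be complex-analytic functions of (t1, t2) on an open domain D ⊆ ℂ², with u nowhere zero, satisfying the Hamiltonian system ∂qₖ/∂tⱼ = ∂Hⱼ/∂pₖ and ∂pₖ/∂tⱼ = −∂Hⱼ/∂qₖ for k, j ∈ {1,2}, where H1 = HG5_1(θ;t1,t2;q1,p1,q2,p2) and H2 = HG5_2(θ;t1,t2;q1,p1,q2,p2), together with the gauge equations ∂u/∂t1 = −q1·u and ∂u/∂t2 = (2t2 − p2)·u. Let D(u) := diag(1,u) and define the 2×2 matrices A4 := diag(0,1), A3 := D(u)⁻¹·[[0, q2],[−1, 0]]·D(u), A2 := D(u)⁻¹·[[−q2, −p1],[−q1, q2+2t2]]·D(u), A1 := D(u)⁻¹·[[p1 − q1q2, p1q1 − (p2 − q2 − 2t2)q2 − θ],[−p2, −p1 + q1q2 + t1]]·D(u), and set A(x) := A4·x³ + A3·x² + A2·x + A1, B1(x) := A4·x + A3, B2(x) := A4·x² + A3·x + A2 + diag(0, −2t2). Then the zero-curvature (isomonodromy) equations hold: for j = 1, 2, for all x ∈ ℂ and all (t1,t2) ∈ D: ∂A(x)/∂tⱼ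 − ∂Bⱼ(x)/∂x + A(x)·Bⱼ(x) − Bⱼ(x)·A(x) = 0. -/

import Mathlib

open Filter Topology Matrix

/-- Fourth Painlevé Hamiltonian `HIV(a,b;t;q,p)`. -/
noncomputable def HIV (a b t q p : ℂ) : ℂ := p * q * (p - q - t) + b * p + a * q

/-- Degenerate Garnier Hamiltonian of pattern 5 (first time variable). -/
noncomputable def HG5_1 (θ t1 t2 q1 p1 q2 p2 : ℂ) : ℂ :=
  -q1 * (q1 * p1 - θ) + q2 * (q1 * (p2 + q2) - 2 * p1 + t1) + p1 * (p2 - 2 * t2)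

/-- Degenerate Garnier Hamiltonian of pattern 5 (second time variable). -/
noncomputable def HG5_2 (θ t1 t2 q1 p1 q2 p2 : ℂ) : ℂ :=
  HIV (-1) θ (2 * t2) q2 p2 + q1 * q2 * (q1 * q2 - 2 * p1 + t1)
    + p1 * (p1 - p2 * q1 - t1)

/-- Conjugation by `D(u) = diag(1,u)` : `M ↦ D(u)⁻¹ M D(u)`. -/
noncomputable def dconj (u : ℂ) (M : Matrix (Fin 2) (Fin 2) ℂ) : Matrix (Fin 2) (Fin 2) ℂ :=
  (Matrix.diagonal ![(1 : ℂ), u])⁻¹ * M * Matrix.diagonal ![(1 : ℂ), u]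

/-- `A4 = diag(0,1)`. -/
noncomputable def G5A4 : Matrix (Fin 2) (Fin 2) ℂ := Matrix.diagonal ![0, 1]

/-- `A3 = D(u)⁻¹ [[0,q2],[−1,0]] D(u)`. -/
noncomputable def G5A3 (q2 u : ℂ) : Matrix (Fin 2) (Fin 2) ℂ :=
  dconj u !![0, q2; -1, 0]

/-- `A2 = D(u)⁻¹ [[−q2,−p1],[−q1,q2+2t2]] D(u)`. -/
noncomputable def G5A2 (t2 q1 p1 q2 u : ℂ) : Matrix (Fin 2) (Fin 2) ℂ :=
  dconj u !![-q2, -p1; -q1, q2 + 2 * t2]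

/-- `A1 = D(u)⁻¹ [[p1−q1q2, p1q1−(p2−q2−2t2)q2−θ],[−p2, −p1+q1q2+t1]] D(u)`. -/
noncomputable def G5A1 (θ t1 t2 q1 p1 q2 p2 u : ℂ) : Matrix (Fin 2) (Fin 2) ℂ :=
  dconj u !![p1 - q1 * q2, p1 * q1 - (p2 - q2 - 2 * t2) * q2 - θ;
             -p2, -p1 + q1 * q2 + t1]

/-- `A(x) = A4 x³ + A3 x² + A2 x + A1`. -/
noncomputable def G5AX (θ t1 t2 q1 p1 q2 p2 u x : ℂ) : Matrix (Fin 2) (Fin 2) ℂ :=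
  x ^ 3 • G5A4 + x ^ 2 • G5A3 q2 u + x • G5A2 t2 q1 p1 q2 u
    + G5A1 θ t1 t2 q1 p1 q2 p2 u

/-- `B1(x) = A4 x + A3`. -/
noncomputable def G5B1 (q2 u x : ℂ) : Matrix (Fin 2) (Fin 2) ℂ := x • G5A4 + G5A3 q2 u

/-- `B2(x) = A4 x² + A3 x + A2 + diag(0,−2t2)`. -/
noncomputable def G5B2 (t2 q1 p1 q2 u x : ℂ) : Matrix (Fin 2) (Fin 2) ℂ :=
  x ^ 2 • G5A4 + x • G5A3 q2 u + G5A2 t2 q1 p1 q2 u + Matrix.diagonal ![0, -2 * t2]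

lemma G5A4_eq : G5A4 = !![(0:ℂ), 0; 0, 1] := by
  rw [G5A4]; ext i j; fin_cases i <;> fin_cases j <;> simp [Matrix.diagonal]

lemma diagt2_eq (t2 : ℂ) : Matrix.diagonal ![(0:ℂ), -2*t2] = !![(0:ℂ), 0; 0, -2*t2] := by
  ext i j; fin_cases i <;> fin_cases j <;> simp [Matrix.diagonal]

lemma diag_inv (u : ℂ) (hu : u ≠ 0) :
    (Matrix.diagonal ![(1 : ℂ), u])⁻¹ = Matrix.diagonal ![(1 : ℂ), u⁻¹] := by
  apply Matrix.inv_eq_right_inv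
  rw [Matrix.diagonal_mul_diagonal]
  have : (fun i => ![(1:ℂ), u] i * ![(1:ℂ), u⁻¹] i) = fun _ => (1:ℂ) := by
    funext i; fin_cases i <;> simp [mul_inv_cancel₀ hu]
  rw [this, Matrix.diagonal_one]

lemma dconj_eq (u : ℂ) (hu : u ≠ 0) (M : Matrix (Fin 2) (Fin 2) ℂ) :
    dconj u M = !![M 0 0, M 0 1 * u; u⁻¹ * M 1 0, M 1 1] := by
  rw [dconj, diag_inv u hu]
  ext i j
  fin_cases i <;> fin_cases j <;>
    simp [Matrix.mul_apply, Fin.sum_univ_two, Matrix.diagonal] <;> field_simp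

lemma AX_entries (θ t1 t2 a b c d u : ℂ) (hu : u ≠ 0) (x : ℂ) :
    G5AX θ t1 t2 a b c d u x =
      !![-(x * c) + b - a * c,
         (x ^ 2 * c - x * b + b * a - (d - c - 2 * t2) * c - θ) * u;
         (-x ^ 2 - x * a - d) * u⁻¹,
         x ^ 3 + x * (c + 2 * t2) - b + a * c + t1] := by
  rw [G5AX, G5A1, G5A2, G5A3, G5A4_eq, dconj_eq u hu, dconj_eq u hu, dconj_eq u hu]
  ext i j
  fin_cases i <;> fin_cases j <;>
    simp [Matrix.smul_apply] <;> ring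

lemma B1_entries (c u : ℂ) (hu : u ≠ 0) (x : ℂ) :
    G5B1 c u x = !![0, c * u; -u⁻¹, x] := by
  rw [G5B1, G5A3, G5A4_eq, dconj_eq u hu]
  ext i j
  fin_cases i <;> fin_cases j <;>
    simp [Matrix.smul_apply] <;> ring

lemma B2_entries (t2 a b c u : ℂ) (hu : u ≠ 0) (x : ℂ) :
    G5B2 t2 a b c u x = !![-c, (x * c - b) * u; (-x - a) * u⁻¹, x ^ 2 + c] := by
  rw [G5B2, G5A2, G5A3, G5A4_eq, diagt2_eq, dconj_eq u hu, dconj_eq u hu]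
  ext i j
  fin_cases i <;> fin_cases j <;>
    simp [Matrix.smul_apply] <;> ring

lemma deriv_quad (a b c w : ℂ) :
    deriv (fun s : ℂ => a * s ^ 2 + b * s + c) w = 2 * a * w + b := by
  have h : HasDerivAt (fun s : ℂ => a * s ^ 2 + b * s + c) (2 * a * w + b) w := by
    have h1 := (((hasDerivAt_pow 2 w).const_mul a).add ((hasDerivAt_id w).const_mul b)).add_const c
    refine h1.congr_deriv ?_
    push_cast; ring
  exact h.deriv

/-- The Hamiltonian system of the Garnier system of pattern 5 (together with the gauge
equations) implies the zero-curvature (isomonodromy) equations for its Lax pair. -/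
theorem stmt3 (θ : ℂ) (D : Set (ℂ × ℂ)) (hD : IsOpen D)
    (q1 p1 q2 p2 u : ℂ × ℂ → ℂ)
    (hq1a : AnalyticOnNhd ℂ q1 D) (hp1a : AnalyticOnNhd ℂ p1 D)
    (hq2a : AnalyticOnNhd ℂ q2 D) (hp2a : AnalyticOnNhd ℂ p2 D)
    (hua : AnalyticOnNhd ℂ u D) (hu0 : ∀ z ∈ D, u z ≠ 0)
    (hq1t1 : ∀ z ∈ D, HasDerivAt (fun s => q1 (s, z.2))
      (deriv (fun w => HG5_1 θ z.1 z.2 (q1 z) w (q2 z) (p2 z)) (p1 z)) z.1)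
    (hp1t1 : ∀ z ∈ D, HasDerivAt (fun s => p1 (s, z.2))
      (-(deriv (fun w => HG5_1 θ z.1 z.2 w (p1 z) (q2 z) (p2 z)) (q1 z))) z.1)
    (hq2t1 : ∀ z ∈ D, HasDerivAt (fun s => q2 (s, z.2))
      (deriv (fun w => HG5_1 θ z.1 z.2 (q1 z) (p1 z) (q2 z) w) (p2 z)) z.1)
    (hp2t1 : ∀ z ∈ D, HasDerivAt (fun s => p2 (s, z.2))
      (-(deriv (fun w => HG5_1 θ z.1 z.2 (q1 z) (p1 z) w (p2 z)) (q2 z))) z.1)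
    (hq1t2 : ∀ z ∈ D, HasDerivAt (fun s => q1 (z.1, s))
      (deriv (fun w => HG5_2 θ z.1 z.2 (q1 z) w (q2 z) (p2 z)) (p1 z)) z.2)
    (hp1t2 : ∀ z ∈ D, HasDerivAt (fun s => p1 (z.1, s))
      (-(deriv (fun w => HG5_2 θ z.1 z.2 w (p1 z) (q2 z) (p2 z)) (q1 z))) z.2)
    (hq2t2 : ∀ z ∈ D, HasDerivAt (fun s => q2 (z.1, s))
      (deriv (fun w => HG5_2 θ z.1 z.2 (q1 z) (p1 z) (q2 z) w) (p2 z)) z.2)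
    (hp2t2 : ∀ z ∈ D, HasDerivAt (fun s => p2 (z.1, s))
      (-(deriv (fun w => HG5_2 θ z.1 z.2 (q1 z) (p1 z) w (p2 z)) (q2 z))) z.2)
    (hut1 : ∀ z ∈ D, HasDerivAt (fun s => u (s, z.2)) (-(q1 z) * u z) z.1)
    (hut2 : ∀ z ∈ D, HasDerivAt (fun s => u (z.1, s)) ((2 * z.2 - p2 z) * u z) z.2) :
    ∀ z ∈ D, ∀ x : ℂ, ∀ i j : Fin 2,
      (HasDerivAt
          (fun s => G5AX θ s z.2 (q1 (s, z.2)) (p1 (s, z.2)) (q2 (s, z.2)) (p2 (s, z.2))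
            (u (s, z.2)) x i j)
          (deriv (fun y => G5B1 (q2 z) (u z) y i j) x
            - (G5AX θ z.1 z.2 (q1 z) (p1 z) (q2 z) (p2 z) (u z) x
                  * G5B1 (q2 z) (u z) x
                - G5B1 (q2 z) (u z) x
                  * G5AX θ z.1 z.2 (q1 z) (p1 z) (q2 z) (p2 z) (u z) x) i j) z.1)
      ∧
      (HasDerivAt
          (fun s => G5AX θ z.1 s (q1 (z.1, s)) (p1 (z.1, s)) (q2 (z.1, s)) (p2 (z.1, s))
            (u (z.1, s)) x i j)
          (deriv (fun y => G5B2 z.2 (q1 z) (p1 z) (q2 z) (u z) y i j) x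
            - (G5AX θ z.1 z.2 (q1 z) (p1 z) (q2 z) (p2 z) (u z) x
                  * G5B2 z.2 (q1 z) (p1 z) (q2 z) (u z) x
                - G5B2 z.2 (q1 z) (p1 z) (q2 z) (u z) x
                  * G5AX θ z.1 z.2 (q1 z) (p1 z) (q2 z) (p2 z) (u z) x) i j) z.2) := by
  intro z hz x i j
  obtain ⟨t1, t2⟩ := z
  dsimp only at hz ⊢
  refine ⟨?_, ?_⟩
  · -- direction 1
    have hu' : u (t1, t2) ≠ 0 := hu0 (t1, t2) hz
    have hU : HasDerivAt (fun s => u (s, t2)) (-(q1 (t1, t2)) * u (t1, t2)) t1 := by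
      have h := hut1 (t1, t2) hz; dsimp only at h; exact h
    have hV : HasDerivAt (fun s => (u (s, t2))⁻¹) (-(-(q1 (t1, t2)) * u (t1, t2)) / u (t1, t2) ^ 2) t1 :=
      hU.inv hu'
    have hne : ∀ᶠ s in nhds t1, u (s, t2) ≠ 0 := hU.continuousAt.eventually_ne hu'
    have hQ1 : HasDerivAt (fun s => q1 (s, t2)) (2 * 0 * (p1 (t1, t2)) + (-(q1 (t1, t2)) ^ 2 - 2 * (q2 (t1, t2)) + p2 (t1, t2) - 2 * t2)) t1 := by
      have h := hq1t1 (t1, t2) hz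
      dsimp only at h
      rw [show (fun w => HG5_1 θ t1 t2 (q1 (t1, t2)) w (q2 (t1, t2)) (p2 (t1, t2))) = (fun w => (0) * w ^ 2 + (-(q1 (t1, t2)) ^ 2 - 2 * (q2 (t1, t2)) + p2 (t1, t2) - 2 * t2) * w + HG5_1 θ t1 t2 (q1 (t1, t2)) 0 (q2 (t1, t2)) (p2 (t1, t2)))
          from funext fun w => by simp only [HG5_1, HG5_2, HIV]; ring, deriv_quad] at h
      exact h
    have hP1 : HasDerivAt (fun s => p1 (s, t2)) (-(2 * (-(p1 (t1, t2))) * (q1 (t1, t2)) + (θ + (q2 (t1, t2)) * (p2 (t1, t2) + q2 (t1, t2))))) t1 := by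
      have h := hp1t1 (t1, t2) hz
      dsimp only at h
      rw [show (fun w => HG5_1 θ t1 t2 w (p1 (t1, t2)) (q2 (t1, t2)) (p2 (t1, t2))) = (fun w => (-(p1 (t1, t2))) * w ^ 2 + (θ + (q2 (t1, t2)) * (p2 (t1, t2) + q2 (t1, t2))) * w + HG5_1 θ t1 t2 0 (p1 (t1, t2)) (q2 (t1, t2)) (p2 (t1, t2)))
          from funext fun w => by simp only [HG5_1, HG5_2, HIV]; ring, deriv_quad] at h
      exact h
    have hQ2 : HasDerivAt (fun s => q2 (s, t2)) (2 * 0 * (p2 (t1, t2)) + ((q1 (t1, t2)) * (q2 (t1, t2)) + p1 (t1, t2))) t1 := by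
      have h := hq2t1 (t1, t2) hz
      dsimp only at h
      rw [show (fun w => HG5_1 θ t1 t2 (q1 (t1, t2)) (p1 (t1, t2)) (q2 (t1, t2)) w) = (fun w => (0) * w ^ 2 + ((q1 (t1, t2)) * (q2 (t1, t2)) + p1 (t1, t2)) * w + HG5_1 θ t1 t2 (q1 (t1, t2)) (p1 (t1, t2)) (q2 (t1, t2)) 0)
          from funext fun w => by simp only [HG5_1, HG5_2, HIV]; ring, deriv_quad] at h
      exact h
    have hP2 : HasDerivAt (fun s => p2 (s, t2)) (-(2 * (q1 (t1, t2)) * (q2 (t1, t2)) + ((q1 (t1, t2)) * (p2 (t1, t2)) - 2 * (p1 (t1, t2)) + t1))) t1 := by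
      have h := hp2t1 (t1, t2) hz
      dsimp only at h
      rw [show (fun w => HG5_1 θ t1 t2 (q1 (t1, t2)) (p1 (t1, t2)) w (p2 (t1, t2))) = (fun w => (q1 (t1, t2)) * w ^ 2 + ((q1 (t1, t2)) * (p2 (t1, t2)) - 2 * (p1 (t1, t2)) + t1) * w + HG5_1 θ t1 t2 (q1 (t1, t2)) (p1 (t1, t2)) 0 (p2 (t1, t2)))
          from funext fun w => by simp only [HG5_1, HG5_2, HIV]; ring, deriv_quad] at h
      exact h
    fin_cases i <;> fin_cases j
    · have heq : (fun s => G5AX θ s t2 (q1 (s, t2)) (p1 (s, t2)) (q2 (s, t2)) (p2 (s, t2)) (u (s, t2)) x 0 0) =ᶠ[nhds t1] (fun s => -(x * q2 (s, t2)) + p1 (s, t2) - q1 (s, t2) * q2 (s, t2)) :=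
        hne.mono fun s hs => by beta_reduce; rw [AX_entries θ s t2 _ _ _ _ _ hs x]; simp
      refine HasDerivAt.congr_of_eventuallyEq ?_ heq
      have hE := (((hQ2.const_mul x).neg.add hP1).sub (hQ1.mul hQ2))
      simp only [AX_entries θ t1 t2 (q1 (t1, t2)) (p1 (t1, t2)) (q2 (t1, t2)) (p2 (t1, t2)) (u (t1, t2)) hu', B1_entries (q2 (t1, t2)) (u (t1, t2)) hu']
      simp only [Matrix.mul_fin_two, Matrix.sub_apply, Matrix.of_apply, Matrix.cons_val', Matrix.cons_val_zero, Matrix.cons_val_one, Matrix.head_cons, Matrix.head_fin_const, Matrix.empty_val', Matrix.cons_val_fin_one, Fin.isValue, Fin.zero_eta, Fin.mk_one]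
      rw [deriv_const]
      refine hE.congr_deriv ?_
      field_simp
      ring
    · have heq : (fun s => G5AX θ s t2 (q1 (s, t2)) (p1 (s, t2)) (q2 (s, t2)) (p2 (s, t2)) (u (s, t2)) x 0 1) =ᶠ[nhds t1] (fun s => (x ^ 2 * q2 (s, t2) - x * p1 (s, t2) + p1 (s, t2) * q1 (s, t2) - (p2 (s, t2) - q2 (s, t2) - 2 * t2) * q2 (s, t2) - θ) * u (s, t2)) :=
        hne.mono fun s hs => by beta_reduce; rw [AX_entries θ s t2 _ _ _ _ _ hs x]; simp
      refine HasDerivAt.congr_of_eventuallyEq ?_ heq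
      have hE := ((((((hQ2.const_mul (x ^ 2)).sub (hP1.const_mul x)).add (hP1.mul hQ1)).sub (((hP2.sub hQ2).sub_const (2 * t2)).mul hQ2)).sub_const θ).mul hU)
      simp only [AX_entries θ t1 t2 (q1 (t1, t2)) (p1 (t1, t2)) (q2 (t1, t2)) (p2 (t1, t2)) (u (t1, t2)) hu', B1_entries (q2 (t1, t2)) (u (t1, t2)) hu']
      simp only [Matrix.mul_fin_two, Matrix.sub_apply, Matrix.of_apply, Matrix.cons_val', Matrix.cons_val_zero, Matrix.cons_val_one, Matrix.head_cons, Matrix.head_fin_const, Matrix.empty_val', Matrix.cons_val_fin_one, Fin.isValue, Fin.zero_eta, Fin.mk_one]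
      rw [deriv_const]
      refine hE.congr_deriv ?_
      simp only [Pi.sub_apply, Pi.add_apply, Pi.mul_apply, Pi.neg_apply]
      field_simp
      ring
    · have heq : (fun s => G5AX θ s t2 (q1 (s, t2)) (p1 (s, t2)) (q2 (s, t2)) (p2 (s, t2)) (u (s, t2)) x 1 0) =ᶠ[nhds t1] (fun s => (-x ^ 2 - x * q1 (s, t2) - p2 (s, t2)) * (u (s, t2))⁻¹) :=
        hne.mono fun s hs => by beta_reduce; rw [AX_entries θ s t2 _ _ _ _ _ hs x]; simp
      refine HasDerivAt.congr_of_eventuallyEq ?_ heq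
      have hE := ((((hQ1.const_mul x).const_sub (-x ^ 2)).sub hP2).mul hV)
      simp only [AX_entries θ t1 t2 (q1 (t1, t2)) (p1 (t1, t2)) (q2 (t1, t2)) (p2 (t1, t2)) (u (t1, t2)) hu', B1_entries (q2 (t1, t2)) (u (t1, t2)) hu']
      simp only [Matrix.mul_fin_two, Matrix.sub_apply, Matrix.of_apply, Matrix.cons_val', Matrix.cons_val_zero, Matrix.cons_val_one, Matrix.head_cons, Matrix.head_fin_const, Matrix.empty_val', Matrix.cons_val_fin_one, Fin.isValue, Fin.zero_eta, Fin.mk_one]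
      rw [deriv_const]
      refine hE.congr_deriv ?_
      simp only [Pi.sub_apply, Pi.add_apply, Pi.mul_apply, Pi.neg_apply]
      field_simp
      ring
    · have heq : (fun s => G5AX θ s t2 (q1 (s, t2)) (p1 (s, t2)) (q2 (s, t2)) (p2 (s, t2)) (u (s, t2)) x 1 1) =ᶠ[nhds t1] (fun s => x ^ 3 + x * (q2 (s, t2) + 2 * t2) - p1 (s, t2) + q1 (s, t2) * q2 (s, t2) + s) :=
        hne.mono fun s hs => by beta_reduce; rw [AX_entries θ s t2 _ _ _ _ _ hs x]; simp
      refine HasDerivAt.congr_of_eventuallyEq ?_ heq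
      have hE := ((((((hQ2.add_const (2 * t2)).const_mul x).const_add (x ^ 3)).sub hP1).add (hQ1.mul hQ2)).add (hasDerivAt_id' t1))
      simp only [AX_entries θ t1 t2 (q1 (t1, t2)) (p1 (t1, t2)) (q2 (t1, t2)) (p2 (t1, t2)) (u (t1, t2)) hu', B1_entries (q2 (t1, t2)) (u (t1, t2)) hu']
      simp only [Matrix.mul_fin_two, Matrix.sub_apply, Matrix.of_apply, Matrix.cons_val', Matrix.cons_val_zero, Matrix.cons_val_one, Matrix.head_cons, Matrix.head_fin_const, Matrix.empty_val', Matrix.cons_val_fin_one, Fin.isValue, Fin.zero_eta, Fin.mk_one]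
      rw [show deriv (fun y : ℂ => y) x = 1 from (hasDerivAt_id' x).deriv]
      refine hE.congr_deriv ?_
      field_simp
      ring
  · -- direction 2
    have hu' : u (t1, t2) ≠ 0 := hu0 (t1, t2) hz
    have hU : HasDerivAt (fun s => u (t1, s)) ((2 * t2 - (p2 (t1, t2))) * u (t1, t2)) t2 := by
      have h := hut2 (t1, t2) hz; dsimp only at h; exact h
    have hV : HasDerivAt (fun s => (u (t1, s))⁻¹) (-((2 * t2 - (p2 (t1, t2))) * u (t1, t2)) / u (t1, t2) ^ 2) t2 :=
      hU.inv hu'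
    have hne : ∀ᶠ s in nhds t2, u (t1, s) ≠ 0 := hU.continuousAt.eventually_ne hu'
    have hQ1 : HasDerivAt (fun s => q1 (t1, s)) (2 * 1 * (p1 (t1, t2)) + (-2 * (q1 (t1, t2)) * (q2 (t1, t2)) - (p2 (t1, t2)) * (q1 (t1, t2)) - t1)) t2 := by
      have h := hq1t2 (t1, t2) hz
      dsimp only at h
      rw [show (fun w => HG5_2 θ t1 t2 (q1 (t1, t2)) w (q2 (t1, t2)) (p2 (t1, t2))) = (fun w => (1) * w ^ 2 + (-2 * (q1 (t1, t2)) * (q2 (t1, t2)) - (p2 (t1, t2)) * (q1 (t1, t2)) - t1) * w + HG5_2 θ t1 t2 (q1 (t1, t2)) 0 (q2 (t1, t2)) (p2 (t1, t2)))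
          from funext fun w => by simp only [HG5_1, HG5_2, HIV]; ring, deriv_quad] at h
      exact h
    have hP1 : HasDerivAt (fun s => p1 (t1, s)) (-(2 * ((q2 (t1, t2)) ^ 2) * (q1 (t1, t2)) + ((q2 (t1, t2)) * t1 - 2 * (p1 (t1, t2)) * (q2 (t1, t2)) - (p1 (t1, t2)) * (p2 (t1, t2))))) t2 := by
      have h := hp1t2 (t1, t2) hz
      dsimp only at h
      rw [show (fun w => HG5_2 θ t1 t2 w (p1 (t1, t2)) (q2 (t1, t2)) (p2 (t1, t2))) = (fun w => ((q2 (t1, t2)) ^ 2) * w ^ 2 + ((q2 (t1, t2)) * t1 - 2 * (p1 (t1, t2)) * (q2 (t1, t2)) - (p1 (t1, t2)) * (p2 (t1, t2))) * w + HG5_2 θ t1 t2 0 (p1 (t1, t2)) (q2 (t1, t2)) (p2 (t1, t2)))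
          from funext fun w => by simp only [HG5_1, HG5_2, HIV]; ring, deriv_quad] at h
      exact h
    have hQ2 : HasDerivAt (fun s => q2 (t1, s)) (2 * (q2 (t1, t2)) * (p2 (t1, t2)) + (-(q2 (t1, t2)) ^ 2 - 2 * t2 * (q2 (t1, t2)) + θ - (q1 (t1, t2)) * (p1 (t1, t2)))) t2 := by
      have h := hq2t2 (t1, t2) hz
      dsimp only at h
      rw [show (fun w => HG5_2 θ t1 t2 (q1 (t1, t2)) (p1 (t1, t2)) (q2 (t1, t2)) w) = (fun w => (q2 (t1, t2)) * w ^ 2 + (-(q2 (t1, t2)) ^ 2 - 2 * t2 * (q2 (t1, t2)) + θ - (q1 (t1, t2)) * (p1 (t1, t2))) * w + HG5_2 θ t1 t2 (q1 (t1, t2)) (p1 (t1, t2)) (q2 (t1, t2)) 0)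
          from funext fun w => by simp only [HG5_1, HG5_2, HIV]; ring, deriv_quad] at h
      exact h
    have hP2 : HasDerivAt (fun s => p2 (t1, s)) (-(2 * ((q1 (t1, t2)) ^ 2 - (p2 (t1, t2))) * (q2 (t1, t2)) + ((p2 (t1, t2)) ^ 2 - 2 * t2 * (p2 (t1, t2)) - 1 - 2 * (q1 (t1, t2)) * (p1 (t1, t2)) + (q1 (t1, t2)) * t1))) t2 := by
      have h := hp2t2 (t1, t2) hz
      dsimp only at h
      rw [show (fun w => HG5_2 θ t1 t2 (q1 (t1, t2)) (p1 (t1, t2)) w (p2 (t1, t2))) = (fun w => ((q1 (t1, t2)) ^ 2 - (p2 (t1, t2))) * w ^ 2 + ((p2 (t1, t2)) ^ 2 - 2 * t2 * (p2 (t1, t2)) - 1 - 2 * (q1 (t1, t2)) * (p1 (t1, t2)) + (q1 (t1, t2)) * t1) * w + HG5_2 θ t1 t2 (q1 (t1, t2)) (p1 (t1, t2)) 0 (p2 (t1, t2)))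
          from funext fun w => by simp only [HG5_1, HG5_2, HIV]; ring, deriv_quad] at h
      exact h
    fin_cases i <;> fin_cases j
    · have heq : (fun s => G5AX θ t1 s (q1 (t1, s)) (p1 (t1, s)) (q2 (t1, s)) (p2 (t1, s)) (u (t1, s)) x 0 0) =ᶠ[nhds t2] (fun s => -(x * q2 (t1, s)) + p1 (t1, s) - q1 (t1, s) * q2 (t1, s)) :=
        hne.mono fun s hs => by beta_reduce; rw [AX_entries θ t1 s _ _ _ _ _ hs x]; simp
      refine HasDerivAt.congr_of_eventuallyEq ?_ heq
      have hE := (((hQ2.const_mul x).neg.add hP1).sub (hQ1.mul hQ2))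
      simp only [AX_entries θ t1 t2 (q1 (t1, t2)) (p1 (t1, t2)) (q2 (t1, t2)) (p2 (t1, t2)) (u (t1, t2)) hu', B2_entries t2 (q1 (t1, t2)) (p1 (t1, t2)) (q2 (t1, t2)) (u (t1, t2)) hu']
      simp only [Matrix.mul_fin_two, Matrix.sub_apply, Matrix.of_apply, Matrix.cons_val', Matrix.cons_val_zero, Matrix.cons_val_one, Matrix.head_cons, Matrix.head_fin_const, Matrix.empty_val', Matrix.cons_val_fin_one, Fin.isValue, Fin.zero_eta, Fin.mk_one]
      rw [deriv_const]
      refine hE.congr_deriv ?_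
      field_simp
      ring
    · have heq : (fun s => G5AX θ t1 s (q1 (t1, s)) (p1 (t1, s)) (q2 (t1, s)) (p2 (t1, s)) (u (t1, s)) x 0 1) =ᶠ[nhds t2] (fun s => (x ^ 2 * q2 (t1, s) - x * p1 (t1, s) + p1 (t1, s) * q1 (t1, s) - (p2 (t1, s) - q2 (t1, s) - 2 * s) * q2 (t1, s) - θ) * u (t1, s)) :=
        hne.mono fun s hs => by beta_reduce; rw [AX_entries θ t1 s _ _ _ _ _ hs x]; simp
      refine HasDerivAt.congr_of_eventuallyEq ?_ heq
      have hE := ((((((hQ2.const_mul (x ^ 2)).sub (hP1.const_mul x)).add (hP1.mul hQ1)).sub (((hP2.sub hQ2).sub ((hasDerivAt_id' t2).const_mul 2)).mul hQ2)).sub_const θ).mul hU)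
      simp only [AX_entries θ t1 t2 (q1 (t1, t2)) (p1 (t1, t2)) (q2 (t1, t2)) (p2 (t1, t2)) (u (t1, t2)) hu', B2_entries t2 (q1 (t1, t2)) (p1 (t1, t2)) (q2 (t1, t2)) (u (t1, t2)) hu']
      simp only [Matrix.mul_fin_two, Matrix.sub_apply, Matrix.of_apply, Matrix.cons_val', Matrix.cons_val_zero, Matrix.cons_val_one, Matrix.head_cons, Matrix.head_fin_const, Matrix.empty_val', Matrix.cons_val_fin_one, Fin.isValue, Fin.zero_eta, Fin.mk_one]
      rw [show deriv (fun y : ℂ => (y * (q2 (t1, t2)) - (p1 (t1, t2))) * (u (t1, t2))) x = 1 * (q2 (t1, t2)) * (u (t1, t2)) from ((((hasDerivAt_id' x).mul_const (q2 (t1, t2))).sub_const (p1 (t1, t2))).mul_const (u (t1, t2))).deriv]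
      refine hE.congr_deriv ?_
      simp only [Pi.sub_apply, Pi.add_apply, Pi.mul_apply, Pi.neg_apply]
      field_simp
      ring
    · have heq : (fun s => G5AX θ t1 s (q1 (t1, s)) (p1 (t1, s)) (q2 (t1, s)) (p2 (t1, s)) (u (t1, s)) x 1 0) =ᶠ[nhds t2] (fun s => (-x ^ 2 - x * q1 (t1, s) - p2 (t1, s)) * (u (t1, s))⁻¹) :=
        hne.mono fun s hs => by beta_reduce; rw [AX_entries θ t1 s _ _ _ _ _ hs x]; simp
      refine HasDerivAt.congr_of_eventuallyEq ?_ heq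
      have hE := ((((hQ1.const_mul x).const_sub (-x ^ 2)).sub hP2).mul hV)
      simp only [AX_entries θ t1 t2 (q1 (t1, t2)) (p1 (t1, t2)) (q2 (t1, t2)) (p2 (t1, t2)) (u (t1, t2)) hu', B2_entries t2 (q1 (t1, t2)) (p1 (t1, t2)) (q2 (t1, t2)) (u (t1, t2)) hu']
      simp only [Matrix.mul_fin_two, Matrix.sub_apply, Matrix.of_apply, Matrix.cons_val', Matrix.cons_val_zero, Matrix.cons_val_one, Matrix.head_cons, Matrix.head_fin_const, Matrix.empty_val', Matrix.cons_val_fin_one, Fin.isValue, Fin.zero_eta, Fin.mk_one]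
      rw [show deriv (fun y : ℂ => (-y - (q1 (t1, t2))) * (u (t1, t2))⁻¹) x = -1 * (u (t1, t2))⁻¹ from (((hasDerivAt_id' x).neg.sub_const (q1 (t1, t2))).mul_const ((u (t1, t2))⁻¹)).deriv]
      refine hE.congr_deriv ?_
      simp only [Pi.sub_apply, Pi.add_apply, Pi.mul_apply, Pi.neg_apply]
      field_simp
      ring
    · have heq : (fun s => G5AX θ t1 s (q1 (t1, s)) (p1 (t1, s)) (q2 (t1, s)) (p2 (t1, s)) (u (t1, s)) x 1 1) =ᶠ[nhds t2] (fun s => x ^ 3 + x * (q2 (t1, s) + 2 * s) - p1 (t1, s) + q1 (t1, s) * q2 (t1, s) + t1) :=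
        hne.mono fun s hs => by beta_reduce; rw [AX_entries θ t1 s _ _ _ _ _ hs x]; simp
      refine HasDerivAt.congr_of_eventuallyEq ?_ heq
      have hE := ((((((hQ2.add ((hasDerivAt_id' t2).const_mul 2)).const_mul x).const_add (x ^ 3)).sub hP1).add (hQ1.mul hQ2)).add_const t1)
      simp only [AX_entries θ t1 t2 (q1 (t1, t2)) (p1 (t1, t2)) (q2 (t1, t2)) (p2 (t1, t2)) (u (t1, t2)) hu', B2_entries t2 (q1 (t1, t2)) (p1 (t1, t2)) (q2 (t1, t2)) (u (t1, t2)) hu']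
      simp only [Matrix.mul_fin_two, Matrix.sub_apply, Matrix.of_apply, Matrix.cons_val', Matrix.cons_val_zero, Matrix.cons_val_one, Matrix.head_cons, Matrix.head_fin_const, Matrix.empty_val', Matrix.cons_val_fin_one, Fin.isValue, Fin.zero_eta, Fin.mk_one]
      rw [show deriv (fun y : ℂ => y ^ 2 + (q2 (t1, t2))) x = (2 : ℕ) * x ^ 1 from ((hasDerivAt_pow 2 x).add_const (q2 (t1, t2))).deriv]
      refine hE.congr_deriv ?_
      field_simp
      ring
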